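/- Let P be a (K',F',Z,S) PDA satisfying conditions C4 (every row has exactly t = K'Z/F' stars) and C5 (with respect to t and a positive integer L), and set K = K' + t(L−1). Let Q be the F' × K user-delivery array constructed from P (stars exactly on U_j in row j, and the h-th null of row j filled with the h-th integer of row j of P). For each g ∈ {1,…,K} let Q^{(g)} be the F' × K array with Q^{(g)}(j,k) = Q(j, Mod(k−g+1, K)), where every integer entry s of the g-th block is relabeled as s + (g−1)S, and let Q̂ be the (K F') × K array obtained by stacking Q^{(1)}, …, Q^{(K)} vertically. Then Q̂ is a (K, KF', tLF', KS) PDA. -/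

import Mathlib

/-- The rank of `x` in a finite set of naturals: the number of elements of `s`
that are `≤ x`. -/
def rankIn (s : Finset ℕ) (x : ℕ) : ℕ := (s.filter (fun y => y ≤ x)).card

/-- For a finite set `A = {A[1] < … < A[t]}` of naturals,
`Uset L A = ⋃_{h=1}^{t} {A[h]+(h−1)(L−1), …, A[h]+h(L−1)}`. -/
def Uset (L : ℕ) (A : Finset ℕ) : Finset ℕ :=
  A.biUnion (fun a =>
    Finset.Icc (a + (rankIn A a - 1) * (L - 1)) (a + rankIn A a * (L - 1)))

/-- `natMod1 b a` is the representative of the integer `b` modulo `a` lying in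
`{1, …, a}` (i.e. `Mod(b,a)` in the paper's notation), as a natural number. -/
def natMod1 (b : ℤ) (a : ℕ) : ℕ :=
  (if b % (a : ℤ) = 0 then (a : ℤ) else b % (a : ℤ)).toNat

namespace Stmt12Aux

open Finset

lemma rankIn_mono (s : Finset ℕ) {x y : ℕ} (h : x ≤ y) : rankIn s x ≤ rankIn s y :=
  Finset.card_le_card (Finset.filter_subset_filter _ (fun a ha => ha) |>.trans
    (by exact fun a ha => by simp only [Finset.mem_filter] at *; exact ⟨ha.1, ha.2.trans h⟩))

lemma one_le_rankIn {s : Finset ℕ} {x : ℕ} (h : x ∈ s) : 1 ≤ rankIn s x := by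
  have : x ∈ s.filter (fun y => y ≤ x) := Finset.mem_filter.2 ⟨h, le_refl x⟩
  exact Finset.card_pos.2 ⟨x, this⟩

lemma rankIn_le_card (s : Finset ℕ) (x : ℕ) : rankIn s x ≤ s.card :=
  Finset.card_le_card (Finset.filter_subset _ _)

lemma rankIn_strict {s : Finset ℕ} {x y : ℕ} (hy : y ∈ s) (hxy : x < y) :
    rankIn s x < rankIn s y := by
  apply Finset.card_lt_card
  constructor
  · intro a ha
    simp only [Finset.mem_filter] at *
    exact ⟨ha.1, ha.2.trans hxy.le⟩
  · intro hsub
    have : y ∈ s.filter (fun z => z ≤ x) := hsub (Finset.mem_filter.2 ⟨hy, le_refl y⟩)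
    simp only [Finset.mem_filter] at this
    omega

lemma rankIn_injOn {s : Finset ℕ} {x y : ℕ} (hx : x ∈ s) (hy : y ∈ s)
    (h : rankIn s x = rankIn s y) : x = y := by
  rcases lt_trichotomy x y with h' | h' | h'
  · exact absurd h (rankIn_strict hy h').ne
  · exact h'
  · exact absurd h.symm (rankIn_strict hx h').ne

lemma rankIn_surj {s : Finset ℕ} {r : ℕ} (h1 : 1 ≤ r) (h2 : r ≤ s.card) :
    ∃ x ∈ s, rankIn s x = r := by
  have himg : s.image (rankIn s) ⊆ Finset.Icc 1 s.card := by
    intro v hv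
    rcases Finset.mem_image.1 hv with ⟨x, hx, rfl⟩
    exact Finset.mem_Icc.2 ⟨one_le_rankIn hx, rankIn_le_card s x⟩
  have hcard : (s.image (rankIn s)).card = s.card := by
    apply Finset.card_image_of_injOn
    intro x hx y hy hxy
    exact rankIn_injOn (Finset.mem_coe.1 hx) (Finset.mem_coe.1 hy) hxy
  have : s.image (rankIn s) = Finset.Icc 1 s.card := by
    apply Finset.eq_of_subset_of_card_le himg
    rw [hcard, Nat.card_Icc]
    omega
  have : r ∈ s.image (rankIn s) := by rw [this]; exact Finset.mem_Icc.2 ⟨h1, h2⟩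
  rcases Finset.mem_image.1 this with ⟨x, hx, hxr⟩
  exact ⟨x, hx, hxr⟩

lemma rankIn_insert_self {s : Finset ℕ} {x : ℕ} (hx : x ∉ s) :
    rankIn (insert x s) x = rankIn s x + 1 := by
  unfold rankIn
  rw [Finset.filter_insert, if_pos (le_refl x), Finset.card_insert_of_notMem]
  intro h
  exact hx (Finset.mem_of_mem_filter x h)

/-- `phi L A x = x + rankIn A x * (L-1)`. -/
def phi (L : ℕ) (A : Finset ℕ) (x : ℕ) : ℕ := x + rankIn A x * (L - 1)

lemma phi_strictMono (L : ℕ) (A : Finset ℕ) : StrictMono (phi L A) := by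
  intro x y hxy
  unfold phi
  have := rankIn_mono A hxy.le
  have : rankIn A x * (L-1) ≤ rankIn A y * (L-1) := Nat.mul_le_mul_right _ this
  omega

lemma mem_Uset {L : ℕ} {A : Finset ℕ} {u : ℕ} :
    u ∈ Uset L A ↔ ∃ a ∈ A,
      a + (rankIn A a - 1) * (L - 1) ≤ u ∧ u ≤ a + rankIn A a * (L - 1) := by
  unfold Uset
  simp [Finset.mem_biUnion, Finset.mem_Icc]

section Main

variable {K' t L : ℕ} {A : Finset ℕ}

lemma Uset_subset (hA : A ⊆ Finset.Icc 1 K') (hcard : A.card = t) :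
    Uset L A ⊆ Finset.Icc 1 (K' + t * (L - 1)) := by
  intro u hu
  rcases mem_Uset.1 hu with ⟨a, ha, h1, h2⟩
  have haK : a ∈ Finset.Icc 1 K' := hA ha
  rw [Finset.mem_Icc] at haK ⊢
  have hr := rankIn_le_card A a
  rw [hcard] at hr
  have : rankIn A a * (L-1) ≤ t * (L-1) := Nat.mul_le_mul_right _ hr
  omega

lemma Uset_card (hA : A ⊆ Finset.Icc 1 K') (hcard : A.card = t) (hL : 1 ≤ L) :
    (Uset L A).card = t * L := by
  unfold Uset
  rw [Finset.card_biUnion]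
  · have : ∀ a ∈ A, (Finset.Icc (a + (rankIn A a - 1) * (L - 1))
        (a + rankIn A a * (L - 1))).card = L := by
      intro a ha
      rw [Nat.card_Icc]
      have h1 := one_le_rankIn ha
      obtain ⟨r, hr⟩ : ∃ r, rankIn A a = r + 1 := ⟨rankIn A a - 1, by omega⟩
      rw [hr]
      simp only [Nat.add_sub_cancel]
      have : (r+1) * (L-1) = r * (L-1) + (L-1) := by ring
      omega
    rw [Finset.sum_congr rfl this, Finset.sum_const, hcard, smul_eq_mul]
  · intro a ha b hb hab
    wlog hlt : a < b generalizing a b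
    · exact (this hb ha (Ne.symm hab) (by omega)).symm
    have hrank : rankIn A a + 1 ≤ rankIn A b := by
      have := rankIn_strict hb hlt; omega
    apply Finset.disjoint_left.2
    intro u hu1 hu2
    rw [Finset.mem_Icc] at hu1 hu2
    have h1 : u ≤ a + rankIn A a * (L-1) := hu1.2
    have h2 : b + (rankIn A b - 1) * (L-1) ≤ u := hu2.1
    have : rankIn A a * (L-1) ≤ (rankIn A b - 1) * (L-1) :=
      Nat.mul_le_mul_right _ (by omega)
    omega

lemma phi_not_mem_Uset (hx : x ∉ A) : phi L A x ∉ Uset L A := by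
  intro h
  rcases mem_Uset.1 h with ⟨a, ha, h1, h2⟩
  rcases lt_trichotomy a x with h' | h' | h'
  · -- a < x : rankIn A a ≤ rankIn A x, top of interval < phi x
    have hr : rankIn A a ≤ rankIn A x := rankIn_mono A h'.le
    have : rankIn A a * (L-1) ≤ rankIn A x * (L-1) := Nat.mul_le_mul_right _ hr
    unfold phi at h2
    omega
  · exact hx (h' ▸ ha)
  · -- x < a : rankIn A x + 1 ≤ rankIn A a, bottom of interval > phi x
    have hr : rankIn A x < rankIn A a := rankIn_strict ha h'
    have h1' : (rankIn A x) * (L-1) ≤ (rankIn A a - 1) * (L-1) :=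
      Nat.mul_le_mul_right _ (by omega)
    unfold phi at h1
    omega

lemma phi_mem_Icc (hA : A ⊆ Finset.Icc 1 K') (hcard : A.card = t)
    (hx1 : 1 ≤ x) (hx2 : x ≤ K') : phi L A x ∈ Finset.Icc 1 (K' + t * (L - 1)) := by
  rw [Finset.mem_Icc]
  unfold phi
  have hr := rankIn_le_card A x
  rw [hcard] at hr
  have : rankIn A x * (L-1) ≤ t * (L-1) := Nat.mul_le_mul_right _ hr
  omega

lemma image_phi (hA : A ⊆ Finset.Icc 1 K') (hcard : A.card = t) (hL : 1 ≤ L) :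
    (Finset.Icc 1 K' \ A).image (phi L A)
      = Finset.Icc 1 (K' + t * (L - 1)) \ Uset L A := by
  have htK : t ≤ K' := by
    have := Finset.card_le_card hA
    rwa [hcard, Nat.card_Icc, Nat.add_sub_cancel] at this
  apply Finset.eq_of_subset_of_card_le
  · intro u hu
    rcases Finset.mem_image.1 hu with ⟨x, hx, rfl⟩
    rcases Finset.mem_sdiff.1 hx with ⟨hx1, hx2⟩
    rw [Finset.mem_Icc] at hx1
    exact Finset.mem_sdiff.2 ⟨phi_mem_Icc hA hcard hx1.1 hx1.2, phi_not_mem_Uset hx2⟩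
  · rw [Finset.card_sdiff_of_subset (Uset_subset hA hcard), Uset_card hA hcard hL,
      Finset.card_image_of_injOn ((phi_strictMono L A).injective.injOn),
      Finset.card_sdiff_of_subset hA, Nat.card_Icc, Nat.card_Icc, hcard]
    have htL : t * L = t * (L-1) + t := by
      conv_lhs => rw [show L = (L-1)+1 by omega]
      ring
    omega

lemma rank_compl (hA : A ⊆ Finset.Icc 1 K') (hcard : A.card = t) (hL : 1 ≤ L)
    (hx : x ∈ Finset.Icc 1 K' \ A) :
    rankIn (Finset.Icc 1 (K' + t * (L - 1)) \ Uset L A) (phi L A x)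
      = rankIn (Finset.Icc 1 K' \ A) x := by
  unfold rankIn
  rw [← image_phi hA hcard hL, Finset.filter_image,
    Finset.card_image_of_injOn ((phi_strictMono L A).injective.injOn)]
  congr 1
  apply Finset.filter_congr
  intro y hy
  simp only [(phi_strictMono L A).le_iff_le]

end Main

section Mod

variable {K : ℕ}

lemma natMod1_mem (hK : 1 ≤ K) (b : ℤ) : natMod1 b K ∈ Finset.Icc 1 K := by
  unfold natMod1
  have hK0 : (0:ℤ) < (K:ℤ) := by exact_mod_cast hK
  have h1 : 0 ≤ b % (K:ℤ) := Int.emod_nonneg b (by omega)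
  have h2 : b % (K:ℤ) < K := Int.emod_lt_of_pos b hK0
  split_ifs with h
  · simp [Finset.mem_Icc, hK]
  · rw [Finset.mem_Icc]
    constructor
    · omega
    · omega

lemma natMod1_modEq (hK : 1 ≤ K) (b : ℤ) : (natMod1 b K : ℤ) ≡ b [ZMOD (K:ℤ)] := by
  unfold natMod1
  have hK0 : (0:ℤ) < (K:ℤ) := by exact_mod_cast hK
  have h1 : 0 ≤ b % (K:ℤ) := Int.emod_nonneg b (by omega)
  have h2 : b % (K:ℤ) < K := Int.emod_lt_of_pos b hK0
  split_ifs with h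
  · rw [Int.toNat_of_nonneg (by omega)]
    unfold Int.ModEq
    rw [Int.emod_self, h]
  · rw [Int.toNat_of_nonneg h1]
    unfold Int.ModEq
    exact Int.emod_emod_of_dvd _ dvd_rfl

lemma eq_of_mem_Icc_of_modEq {u v : ℕ} (hu : u ∈ Finset.Icc 1 K)
    (hv : v ∈ Finset.Icc 1 K) (h : (u:ℤ) ≡ (v:ℤ) [ZMOD (K:ℤ)]) : u = v := by
  rw [Finset.mem_Icc] at hu hv
  have hd : (K:ℤ) ∣ (v:ℤ) - (u:ℤ) := Int.ModEq.dvd h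
  have hK0 : (0:ℤ) < (K:ℤ) := by exact_mod_cast hu.1.trans hu.2
  have hb1 : (v:ℤ) - (u:ℤ) < K := by omega
  have hb2 : -(K:ℤ) < (v:ℤ) - (u:ℤ) := by omega
  rcases hd with ⟨c, hc⟩
  have hc0 : c = 0 := by
    rcases lt_trichotomy c 0 with h' | h' | h'
    · nlinarith
    · exact h'
    · nlinarith
  rw [hc0, mul_zero] at hc
  omega

lemma natMod1_eq_of (hK : 1 ≤ K) {u : ℕ} (hu : u ∈ Finset.Icc 1 K) {b : ℤ}
    (h : (u:ℤ) ≡ b [ZMOD (K:ℤ)]) : natMod1 b K = u :=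
  eq_of_mem_Icc_of_modEq (natMod1_mem hK b) hu ((natMod1_modEq hK b).trans h.symm)

end Mod

end Stmt12Aux

namespace Stmt12Aux
section Mod2
variable {K : ℕ}

lemma natMod1_inj_of (hK : 1 ≤ K) {u v : ℕ} (hu : u ∈ Finset.Icc 1 K)
    (hv : v ∈ Finset.Icc 1 K) {b1 b2 : ℤ} (h : natMod1 b1 K = natMod1 b2 K)
    (hbb : b1 - b2 = (u:ℤ) - v) : u = v := by
  have h1 := natMod1_modEq hK b1
  have h2 := natMod1_modEq hK b2
  rw [h] at h1
  have hb : b1 ≡ b2 [ZMOD (K:ℤ)] := h1.symm.trans h2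
  apply eq_of_mem_Icc_of_modEq hu hv
  have hd := Int.ModEq.dvd hb
  have he : (v:ℤ) - (u:ℤ) = b2 - b1 := by omega
  exact Int.modEq_iff_dvd.2 (he ▸ hd)

lemma natMod1_round (hK : 1 ≤ K) {u : ℕ} (hu : u ∈ Finset.Icc 1 K) (k g : ℤ)
    (hg : ((g:ℤ)) ≡ k - u + 1 [ZMOD (K:ℤ)]) :
    natMod1 (k - g + 1) K = u := by
  have hcong : (k + 1) - g ≡ (k + 1) - (k - (u:ℤ) + 1) [ZMOD (K:ℤ)] :=
    (Int.ModEq.refl _).sub hg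
  have e1 : (k + 1) - (k - (u:ℤ) + 1) = u := by ring
  have e2 : (k + 1) - g = k - g + 1 := by ring
  rw [e1, e2] at hcong
  exact natMod1_eq_of hK hu hcong.symm

end Mod2
end Stmt12Aux

open Stmt12Aux

/-- Let `P` be a `(K',F',Z,S)` PDA satisfying C4 (every row has exactly
`t = K'Z/F'` stars) and C5 (w.r.t. `t` and `L ≥ 1`), and let `K = K' + t(L−1)`.
Let `Q` be the `F' × K` user-delivery array built from `P` (stars exactly on
`U_j = Uset L (A j)` in row `j`, nulls filled rank-by-rank with the integer entries of
row `j` of `P`).  For `g ∈ {1,…,K}` let `Q^{(g)}(j,k) = Q(j, Mod(k−g+1,K))` with every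
integer entry `s` relabeled as `s + (g−1)S`, and let `Q̂` be the vertical stack of
`Q^{(1)},…,Q^{(K)}` (rows indexed by pairs `(g,j)`).  Then `Q̂` is a
`(K, KF', tLF', KS)` PDA. -/
theorem stmt_12 (K' F' Z S t L K : ℕ)
    (ht : 1 ≤ t) (hL : 1 ≤ L) (hK : K = K' + t * (L - 1))
    (htZ : t * F' = K' * Z)
    (P : Fin F' → ℕ → Option ℕ)
    (hPent : ∀ j, ∀ k ∈ Finset.Icc 1 K', ∀ s, P j k = some s → s ∈ Finset.Icc 1 S)
    (hC1 : ∀ k ∈ Finset.Icc 1 K',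
      ((Finset.univ : Finset (Fin F')).filter (fun j => P j k = none)).card = Z)
    (hC2 : ∀ s ∈ Finset.Icc 1 S, ∃ j : Fin F', ∃ k ∈ Finset.Icc 1 K', P j k = some s)
    (hC3 : ∀ j1 j2 : Fin F', ∀ k1 ∈ Finset.Icc 1 K', ∀ k2 ∈ Finset.Icc 1 K',
      (j1, k1) ≠ (j2, k2) → P j1 k1 = P j2 k2 → P j1 k1 ≠ none →
      j1 ≠ j2 ∧ k1 ≠ k2 ∧ P j1 k2 = none ∧ P j2 k1 = none)
    (A : Fin F' → Finset ℕ)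
    (hA : ∀ j, A j = (Finset.Icc 1 K').filter (fun k => P j k = none))
    (hC4 : ∀ j, (A j).card = t)
    (hC5 : ∀ j1 j2 : Fin F', ∀ k1 ∈ Finset.Icc 1 K', ∀ k2 ∈ Finset.Icc 1 K',
      (j1, k1) ≠ (j2, k2) → P j1 k1 = P j2 k2 → P j1 k1 ≠ none →
      k1 + (rankIn (insert k1 (A j1)) k1 - 1) * (L - 1) ∈ Uset L (A j2) ∧
      k2 + (rankIn (insert k2 (A j2)) k2 - 1) * (L - 1) ∈ Uset L (A j1))
    (Q : Fin F' → ℕ → Option ℕ)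
    (hQstar : ∀ j, ∀ k ∈ Finset.Icc 1 K, (Q j k = none ↔ k ∈ Uset L (A j)))
    (hQint : ∀ j, ∀ k ∈ Finset.Icc 1 K, k ∉ Uset L (A j) →
      ∀ k' ∈ Finset.Icc 1 K', P j k' ≠ none →
      rankIn ((Finset.Icc 1 K) \ Uset L (A j)) k
        = rankIn ((Finset.Icc 1 K').filter (fun c => P j c ≠ none)) k' →
      Q j k = P j k')
    -- Q̂ : the row (g,j) of the stacked array, g ∈ {1,…,K}
    (Qhat : ℕ → Fin F' → ℕ → Option ℕ)
    (hQhat : ∀ g : ℕ, ∀ j : Fin F', ∀ k : ℕ,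
      Qhat g j k = Option.map (fun s => s + (g - 1) * S)
        (Q j (natMod1 ((k : ℤ) - (g : ℤ) + 1) K))) :
    -- Q̂ is a (K, K·F', t·L·F', K·S) PDA:
    -- entries lie in {*} ∪ {1,…,K·S}
    (∀ g ∈ Finset.Icc 1 K, ∀ j : Fin F', ∀ k ∈ Finset.Icc 1 K, ∀ s,
      Qhat g j k = some s → s ∈ Finset.Icc 1 (K * S)) ∧
    -- C1: each of the K columns contains exactly t·L·F' stars
    (∀ k ∈ Finset.Icc 1 K,
      (((Finset.Icc 1 K) ×ˢ (Finset.univ : Finset (Fin F'))).filter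
        (fun p => Qhat p.1 p.2 k = none)).card = t * L * F') ∧
    -- C2: every integer of {1,…,K·S} occurs at least once
    (∀ s ∈ Finset.Icc 1 (K * S), ∃ g ∈ Finset.Icc 1 K, ∃ j : Fin F',
      ∃ k ∈ Finset.Icc 1 K, Qhat g j k = some s) ∧
    -- C3
    (∀ g1 ∈ Finset.Icc 1 K, ∀ g2 ∈ Finset.Icc 1 K, ∀ j1 j2 : Fin F',
      ∀ k1 ∈ Finset.Icc 1 K, ∀ k2 ∈ Finset.Icc 1 K,
      ((g1, j1), k1) ≠ ((g2, j2), k2) → Qhat g1 j1 k1 = Qhat g2 j2 k2 →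
      Qhat g1 j1 k1 ≠ none →
      (g1, j1) ≠ (g2, j2) ∧ k1 ≠ k2 ∧ Qhat g1 j1 k2 = none ∧ Qhat g2 j2 k1 = none) := by
  classical
  have hAsub : ∀ j, A j ⊆ Finset.Icc 1 K' := fun j => by
    rw [hA]; exact Finset.filter_subset _ _
  have hnonstar : ∀ j, (Finset.Icc 1 K').filter (fun c => P j c ≠ none)
      = Finset.Icc 1 K' \ A j := fun j => by
    rw [hA]; exact Finset.filter_not _ _
  have hAnotmem : ∀ j x, P j x ≠ none → x ∉ A j := by
    intro j x hx h
    rw [hA] at h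
    exact hx (Finset.mem_filter.1 h).2
  -- forward: Q at phi-image equals P
  have hQval : ∀ j : Fin F', ∀ x ∈ Finset.Icc 1 K', P j x ≠ none →
      phi L (A j) x ∈ Finset.Icc 1 K ∧ phi L (A j) x ∉ Uset L (A j) ∧
        Q j (phi L (A j) x) = P j x := by
    intro j x hx hPx
    have hxA : x ∉ A j := hAnotmem j x hPx
    have hxB : x ∈ Finset.Icc 1 K' \ A j := Finset.mem_sdiff.2 ⟨hx, hxA⟩
    rw [Finset.mem_Icc] at hx
    have hmem : phi L (A j) x ∈ Finset.Icc 1 K := by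
      rw [hK]; exact phi_mem_Icc (hAsub j) (hC4 j) hx.1 hx.2
    have hnot : phi L (A j) x ∉ Uset L (A j) := phi_not_mem_Uset hxA
    refine ⟨hmem, hnot, ?_⟩
    apply hQint j _ hmem hnot x (Finset.mem_Icc.2 hx) hPx
    rw [hnonstar]
    have := rank_compl (hAsub j) (hC4 j) hL hxB
    rw [← hK] at this
    exact this
  -- backward: every non-star position of Q is a phi-image
  have hQrep : ∀ j : Fin F', ∀ m ∈ Finset.Icc 1 K, m ∉ Uset L (A j) →
      ∃ x ∈ Finset.Icc 1 K', P j x ≠ none ∧ m = phi L (A j) x := by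
    intro j m hm hmU
    have : m ∈ (Finset.Icc 1 K' \ A j).image (phi L (A j)) := by
      rw [image_phi (hAsub j) (hC4 j) hL, ← hK]
      exact Finset.mem_sdiff.2 ⟨hm, hmU⟩
    rcases Finset.mem_image.1 this with ⟨x, hx, rfl⟩
    rcases Finset.mem_sdiff.1 hx with ⟨hx1, hx2⟩
    refine ⟨x, hx1, ?_, rfl⟩
    intro hP
    exact hx2 (by rw [hA]; exact Finset.mem_filter.2 ⟨hx1, hP⟩)
  -- integer entries of Q lie in [1,S]
  have hQrange : ∀ j : Fin F', ∀ m ∈ Finset.Icc 1 K, ∀ s0, Q j m = some s0 →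
      s0 ∈ Finset.Icc 1 S := by
    intro j m hm s0 hQ
    have hmU : m ∉ Uset L (A j) := by
      intro h
      rw [← hQstar j m hm] at h
      rw [hQ] at h
      exact Option.some_ne_none s0 h
    rcases hQrep j m hm hmU with ⟨x, hx, hPx, rfl⟩
    have hv := (hQval j x hx hPx).2.2
    exact hPent j x hx s0 (by rw [← hv]; exact hQ)
  refine ⟨?_, ?_, ?_, ?_⟩
  · -- entry range
    intro g hg j k hk s hs
    rw [hQhat] at hs
    rcases Option.map_eq_some_iff.1 hs with ⟨s0, hQs0, rfl⟩
    have hK1 : 1 ≤ K := by rw [Finset.mem_Icc] at hg; omega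
    have hs0 := hQrange j _ (natMod1_mem hK1 _) s0 hQs0
    rw [Finset.mem_Icc] at hg hs0 ⊢
    constructor
    · omega
    · have h1 : s0 + (g-1)*S ≤ S + (g-1)*S := by omega
      have h2 : S + (g-1)*S = g * S := by
        conv_rhs => rw [show g = (g-1)+1 by omega]
        ring
      have h3 : g * S ≤ K * S := Nat.mul_le_mul_right _ hg.2
      omega
  · -- C1 star count
    intro k hk
    have hK1 : 1 ≤ K := by rw [Finset.mem_Icc] at hk; omega
    have hrow : ∀ j : Fin F',
        ((Finset.Icc 1 K).filter (fun g => Qhat g j k = none)).card = t * L := by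
      intro j
      have hUsub : Uset L (A j) ⊆ Finset.Icc 1 K := by
        rw [hK]; exact Uset_subset (hAsub j) (hC4 j)
      rw [show t * L = (Uset L (A j)).card from (Uset_card (hAsub j) (hC4 j) hL).symm]
      refine Finset.card_nbij (fun g => natMod1 ((k:ℤ) - (g:ℤ) + 1) K) ?_ ?_ ?_
      · intro g hg
        rcases Finset.mem_filter.1 hg with ⟨hg1, hg2⟩
        rw [hQhat, Option.map_eq_none_iff] at hg2
        exact (hQstar j _ (natMod1_mem hK1 _)).1 hg2
      · intro g1 hg1 g2 hg2 he
        have hg1' := (Finset.mem_filter.1 (Finset.mem_coe.1 hg1)).1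
        have hg2' := (Finset.mem_filter.1 (Finset.mem_coe.1 hg2)).1
        exact (natMod1_inj_of hK1 hg2' hg1' he (by push_cast; ring)).symm
      · intro u hu
        have huU := Finset.mem_coe.1 hu
        have huIcc : u ∈ Finset.Icc 1 K := hUsub huU
        refine ⟨natMod1 ((k:ℤ) - u + 1) K, ?_, ?_⟩
        · have hmm : natMod1 ((k:ℤ) - (natMod1 ((k:ℤ) - u + 1) K : ℤ) + 1) K = u :=
            natMod1_round hK1 huIcc _ _ (natMod1_modEq hK1 _)
          apply Finset.mem_coe.2
          refine Finset.mem_filter.2 ⟨natMod1_mem hK1 _, ?_⟩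
          rw [hQhat, hmm, (hQstar j u huIcc).2 huU]
          rfl
        · exact natMod1_round hK1 huIcc _ _ (natMod1_modEq hK1 _)
    rw [Finset.card_filter, Finset.sum_product, Finset.sum_comm]
    have hterm : ∀ j : Fin F',
        (∑ g ∈ Finset.Icc 1 K, if Qhat g j k = none then 1 else 0) = t * L := by
      intro j
      rw [← Finset.card_filter]
      exact hrow j
    rw [Finset.sum_congr rfl (fun j _ => hterm j), Finset.sum_const, Finset.card_univ,
      Fintype.card_fin, smul_eq_mul]
    ring
  · -- C2
    intro s hs
    rw [Finset.mem_Icc] at hs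
    have hS1 : 1 ≤ S := by
      by_contra h
      have : S = 0 := by omega
      rw [this, Nat.mul_zero] at hs
      omega
    have hK1 : 1 ≤ K := by
      by_contra h
      have : K = 0 := by omega
      rw [this, Nat.zero_mul] at hs
      omega
    have hgK : (s-1)/S + 1 ≤ K := by
      have hlt : s - 1 < S * K := by
        have h2 := hs.2
        rw [Nat.mul_comm K S] at h2
        omega
      exact Nat.succ_le_of_lt (Nat.div_lt_of_lt_mul hlt)
    have hs0mem : (s-1) % S + 1 ∈ Finset.Icc 1 S := by
      rw [Finset.mem_Icc]
      have := Nat.mod_lt (s-1) (show 0 < S by omega)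
      omega
    rcases hC2 _ hs0mem with ⟨j, x, hx, hPx⟩
    have hPne : P j x ≠ none := by rw [hPx]; exact Option.some_ne_none _
    obtain ⟨hmem, hnot, hQeq⟩ := hQval j x hx hPne
    set g := (s-1)/S + 1 with hgdef
    refine ⟨g, Finset.mem_Icc.2 ⟨by rw [hgdef]; exact Nat.le_add_left 1 _, hgK⟩, j,
      natMod1 ((phi L (A j) x : ℤ) + g - 1) K, natMod1_mem hK1 _, ?_⟩
    have hmm : natMod1 ((natMod1 ((phi L (A j) x : ℤ) + g - 1) K : ℤ) - g + 1) K
        = phi L (A j) x := by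
      apply natMod1_eq_of hK1 hmem
      have hcong := natMod1_modEq hK1 ((phi L (A j) x : ℤ) + g - 1)
      have h4 := (Int.ModEq.refl (1 - (g:ℤ))).add hcong
      have e1 : (1 - (g:ℤ)) + (natMod1 ((phi L (A j) x : ℤ) + g - 1) K : ℤ)
          = (natMod1 ((phi L (A j) x : ℤ) + g - 1) K : ℤ) - g + 1 := by ring
      have e2 : (1 - (g:ℤ)) + ((phi L (A j) x : ℤ) + g - 1) = (phi L (A j) x : ℤ) := by
        ring
      rw [e1, e2] at h4
      exact h4.symm
    rw [hQhat, hmm, hQeq, hPx, Option.map_some]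
    congr 1
    have hg1 : g - 1 = (s-1)/S := by rw [hgdef]; simp
    rw [hg1]
    have hmd := Nat.mod_add_div' (s-1) S
    obtain ⟨a, ha⟩ : ∃ a, (s-1) % S = a := ⟨_, rfl⟩
    obtain ⟨b, hb⟩ : ∃ b, (s-1)/S * S = b := ⟨_, rfl⟩
    rw [ha, hb] at hmd ⊢
    omega
  · -- C3
    intro g1 hg1 g2 hg2 j1 j2 k1 hk1 k2 hk2 hne heq hnn
    have hK1 : 1 ≤ K := by rw [Finset.mem_Icc] at hg1; omega
    have hm1K := natMod1_mem hK1 ((k1:ℤ) - g1 + 1)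
    have hm2K := natMod1_mem hK1 ((k2:ℤ) - g2 + 1)
    obtain ⟨s01, hQ1⟩ : ∃ s01, Q j1 (natMod1 ((k1:ℤ) - g1 + 1) K) = some s01 := by
      rcases h : Q j1 (natMod1 ((k1:ℤ) - g1 + 1) K) with _ | s01
      · exfalso; apply hnn; rw [hQhat, h]; rfl
      · exact ⟨s01, rfl⟩
    rw [hQhat, hQhat, hQ1] at heq
    obtain ⟨s02, hQ2⟩ : ∃ s02, Q j2 (natMod1 ((k2:ℤ) - g2 + 1) K) = some s02 := by
      rcases h : Q j2 (natMod1 ((k2:ℤ) - g2 + 1) K) with _ | s02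
      · exfalso; rw [h] at heq; exact Option.some_ne_none _ heq
      · exact ⟨s02, rfl⟩
    rw [hQ2] at heq
    simp only [Option.map_some, Option.some.injEq] at heq
    have hs01 := hQrange j1 _ hm1K s01 hQ1
    have hs02 := hQrange j2 _ hm2K s02 hQ2
    rw [Finset.mem_Icc] at hs01 hs02 hg1 hg2
    have hgg : g1 = g2 := by
      rcases lt_trichotomy g1 g2 with h' | h' | h'
      · exfalso
        have hmul : ((g1-1)+1) * S ≤ (g2-1)*S := Nat.mul_le_mul_right _ (by omega)
        have : ((g1-1)+1) * S = (g1-1)*S + S := by ring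
        omega
      · exact h'
      · exfalso
        have hmul : ((g2-1)+1) * S ≤ (g1-1)*S := Nat.mul_le_mul_right _ (by omega)
        have : ((g2-1)+1) * S = (g2-1)*S + S := by ring
        omega
    subst hgg
    have hss : s01 = s02 := by omega
    subst hss
    -- representations via phi
    have hm1U : natMod1 ((k1:ℤ) - g1 + 1) K ∉ Uset L (A j1) := by
      intro h
      rw [← hQstar j1 _ hm1K, hQ1] at h
      exact Option.some_ne_none _ h
    have hm2U : natMod1 ((k2:ℤ) - g1 + 1) K ∉ Uset L (A j2) := by
      intro h
      rw [← hQstar j2 _ hm2K, hQ2] at h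
      exact Option.some_ne_none _ h
    obtain ⟨x1, hx1, hP1, hphi1⟩ := hQrep j1 _ hm1K hm1U
    obtain ⟨x2, hx2, hP2, hphi2⟩ := hQrep j2 _ hm2K hm2U
    have hPx1 : P j1 x1 = some s01 := by
      rw [← (hQval j1 x1 hx1 hP1).2.2, ← hphi1, hQ1]
    have hPx2 : P j2 x2 = some s01 := by
      rw [← (hQval j2 x2 hx2 hP2).2.2, ← hphi2, hQ2]
    have hne' : (j1, x1) ≠ (j2, x2) := by
      intro h
      injection h with hj hx
      have hmeq : natMod1 ((k1:ℤ) - g1 + 1) K = natMod1 ((k2:ℤ) - g1 + 1) K := by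
        rw [hphi1, hphi2, hj, hx]
      have hkk : k1 = k2 := natMod1_inj_of hK1 hk1 hk2 hmeq (by push_cast; ring)
      exact hne (by rw [hj, hkk])
    have hPP : P j1 x1 = P j2 x2 := by rw [hPx1, hPx2]
    have hPnn : P j1 x1 ≠ none := by rw [hPx1]; exact Option.some_ne_none _
    obtain ⟨hj12, _, _, _⟩ := hC3 j1 j2 x1 hx1 x2 hx2 hne' hPP hPnn
    obtain ⟨hc51, hc52⟩ := hC5 j1 j2 x1 hx1 x2 hx2 hne' hPP hPnn
    have hx1A : x1 ∉ A j1 := hAnotmem j1 x1 hP1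
    have hx2A : x2 ∉ A j2 := hAnotmem j2 x2 hP2
    have hc5e1 : x1 + (rankIn (insert x1 (A j1)) x1 - 1) * (L - 1) = phi L (A j1) x1 := by
      rw [rankIn_insert_self hx1A]
      simp [phi]
    have hc5e2 : x2 + (rankIn (insert x2 (A j2)) x2 - 1) * (L - 1) = phi L (A j2) x2 := by
      rw [rankIn_insert_self hx2A]
      simp [phi]
    rw [hc5e1] at hc51
    rw [hc5e2] at hc52
    have hm1in : natMod1 ((k1:ℤ) - g1 + 1) K ∈ Uset L (A j2) := by rw [hphi1]; exact hc51
    have hm2in : natMod1 ((k2:ℤ) - g1 + 1) K ∈ Uset L (A j1) := by rw [hphi2]; exact hc52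
    have hm12 : natMod1 ((k1:ℤ) - g1 + 1) K ≠ natMod1 ((k2:ℤ) - g1 + 1) K := by
      intro h
      rw [h] at hm1in
      exact hm2U hm1in
    have hk12 : k1 ≠ k2 := by
      intro h
      exact hm12 (by rw [h])
    refine ⟨?_, hk12, ?_, ?_⟩
    · intro h
      exact hj12 (congrArg Prod.snd h)
    · rw [hQhat, (hQstar j1 _ hm2K).2 hm2in]
      rfl
    · rw [hQhat, (hQstar j2 _ hm1K).2 hm1in]
      rfl
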